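/- arXiv:math-ph/0205039 — 5 statements merged into one kernel-verified Lean document; each statement's English description precedes it below -/
import Mathlib

section
/- For every integer l ≥ 1, the identity ∏_{j=1}^{l} (2j-1)(2j) = 2 · ∏_{j=1}^{l} j(2l-j) holds; equivalently, (2l)! = 2 · l! · (2l-1)!/(l-1)!. (This is the identity ∏_j (d_j-1)d_j = z·∏_k r_k for the root system B_l.) -/
open Finset

lemma fact_helper (n : ℕ) : ∏ k ∈ Finset.Icc 1 n, k = n.factorial := by
  have : Finset.Icc 1 n = Finset.Ico 1 (n + 1) := by ext x; simp
  rw [this, Finset.prod_Ico_id_eq_factorial]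

lemma lemA (l : ℕ) : ∏ j ∈ Finset.Icc 1 l, (2 * j - 1) * (2 * j) = (2 * l).factorial := by
  induction l with
  | zero => simp
  | succ n ih =>
    rw [← Finset.insert_Icc_right_eq_Icc_add_one (by omega : 1 ≤ n + 1),
      Finset.prod_insert (by simp), ih]
    have h : 2 * (n + 1) = (2 * n + 1) + 1 := by ring
    rw [h, Nat.factorial_succ, Nat.factorial_succ]
    simp only [Nat.add_sub_cancel]
    ring

lemma lemB (l : ℕ) (hl : 1 ≤ l) :
    ∏ j ∈ Finset.Icc 1 l, (2 * l - j) = ∏ k ∈ Finset.Icc l (2 * l - 1), k := by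
  apply Finset.prod_nbij' (fun j => 2 * l - j) (fun k => 2 * l - k)
  all_goals intro a ha
  all_goals simp at ha ⊢
  all_goals omega

lemma lemC (l : ℕ) (hl : 1 ≤ l) :
    (l - 1).factorial * ∏ k ∈ Finset.Icc l (2 * l - 1), k = (2 * l - 1).factorial := by
  have h2 : Finset.Icc 1 (l - 1) = Finset.Ioc 0 (l - 1) := by ext x; simp; omega
  have h3 : Finset.Icc l (2 * l - 1) = Finset.Ioc (l - 1) (2 * l - 1) := by
    ext x; simp; omega
  rw [← fact_helper (l - 1), h2, h3,
    Finset.prod_Ioc_consecutive _ (by omega) (by omega)]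
  have h4 : Finset.Ioc 0 (2 * l - 1) = Finset.Icc 1 (2 * l - 1) := by ext x; simp; omega
  rw [h4, fact_helper]

theorem prod_degrees_eq_center_mul_prod_r_B (l : ℕ) (hl : 1 ≤ l) :
    ∏ j ∈ Finset.Icc 1 l, (2 * j - 1) * (2 * j) =
      2 * ∏ j ∈ Finset.Icc 1 l, j * (2 * l - j) := by
  rw [lemA, Finset.prod_mul_distrib, fact_helper, lemB l hl]
  apply Nat.eq_of_mul_eq_mul_left (Nat.factorial_pos (l - 1))
  calc (l-1).factorial * (2*l).factorial
      = (2*l) * ((l-1).factorial * (2*l-1).factorial) := by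
        rw [← Nat.mul_factorial_pred (by omega : 2*l ≠ 0)]; ring
    _ = (2*l) * ((l-1).factorial * ((l-1).factorial * ∏ k ∈ Finset.Icc l (2*l-1), k)) := by
        rw [lemC l hl]
    _ = (l-1).factorial * (2 * (l.factorial * ∏ k ∈ Finset.Icc l (2*l-1), k)) := by
        rw [← Nat.mul_factorial_pred (by omega : l ≠ 0)]; ring
end

section
/- For every integer n ≥ 2, Σ_{m=1}^{n-1} 1/sin²(mπ/n) = (n² − 1)/3. -/
open Finset Complex

lemma sum_cast_id (n : ℕ) : ∑ k ∈ range n, (k:ℂ) = n*(n-1)/2 := by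
  induction n with
  | zero => simp
  | succ m ih => rw [Finset.sum_range_succ, ih]; push_cast; ring

lemma sum_cast_sq (n : ℕ) : ∑ k ∈ range n, (k:ℂ)^2 = n*(n-1)*(2*n-1)/6 := by
  induction n with
  | zero => simp
  | succ m ih => rw [Finset.sum_range_succ, ih]; push_cast; ring

lemma geom_zero {n : ℕ} {z : ℂ} (hz : z ≠ 1) (h : z ^ n = 1) :
    ∑ k ∈ range n, z ^ k = 0 := by
  rw [geom_sum_eq hz, h, sub_self, zero_div]

lemma lemA_s10 {n : ℕ} {z : ℂ} (hz : z ≠ 1) (h : z ^ n = 1) :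
    (1 - z) * ∑ k ∈ range n, (k:ℂ) * z ^ k = -n := by
  have expand : (1 - z) * ∑ k ∈ range n, (k:ℂ) * z ^ k
      = (∑ k ∈ range n, ((k:ℂ) * z ^ k - ((k:ℂ)+1) * z ^ (k+1)))
        + z * ∑ k ∈ range n, z ^ k := by
    rw [Finset.mul_sum, Finset.mul_sum, ← Finset.sum_add_distrib]
    refine Finset.sum_congr rfl fun k _ => ?_
    rw [pow_succ]; ring
  have h1 : (∑ k ∈ range n, (((k:ℕ):ℂ) * z ^ k - (((k+1:ℕ)):ℂ) * z ^ (k+1)))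
      = ((0:ℕ):ℂ) * z ^ 0 - ((n:ℕ):ℂ) * z ^ n :=
    Finset.sum_range_sub' (fun k => ((k:ℕ):ℂ) * z ^ k) n
  push_cast at h1
  rw [expand, h1, geom_zero hz h, h]
  ring

lemma sin_sq_inv (x : ℂ) (h : Complex.exp (x*Complex.I) ^ 2 ≠ 1) :
    1 / Complex.sin x ^ 2
      = -4 * Complex.exp (x*Complex.I)^2 / (1 - Complex.exp (x*Complex.I)^2) ^ 2 := by
  set w := Complex.exp (x*Complex.I) with hw
  have hw0 : w ≠ 0 := Complex.exp_ne_zero _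
  have hne : 1 - w^2 ≠ 0 := sub_ne_zero.mpr (Ne.symm h)
  have hsin : Complex.sin x = (w⁻¹ - w) * Complex.I / 2 := by
    rw [Complex.sin, neg_mul, Complex.exp_neg, ← hw]
  have hsin2 : Complex.sin x ^ 2 = -((1-w^2)^2)/(4*w^2) := by
    rw [hsin, div_pow, mul_pow, Complex.I_sq]
    field_simp
    ring
  rw [hsin2, one_div, inv_div]
  field_simp

lemma geom_zero' {n : ℕ} {z : ℂ} (hz : z ≠ 1) (h : z ^ n = 1) :
    ∑ k ∈ range n, z ^ k = 0 := by
  rw [geom_sum_eq hz, h, sub_self, zero_div]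

lemma innerSumAux {n : ℕ} (hn : 2 ≤ n) {ζ : ℂ} (hprim : IsPrimitiveRoot ζ n)
    (t : ℕ) (h1 : 1 ≤ t) (h2 : t < 2*n) :
    ∑ m ∈ Ico 1 n, (ζ ^ t) ^ m = if t = n then ((n:ℂ) - 1) else -1 := by
  by_cases ht : t = n
  · subst ht
    rw [hprim.pow_eq_one, if_pos rfl]
    simp only [one_pow, Finset.sum_const, Nat.card_Ico, nsmul_eq_mul, mul_one]
    have : (1:ℕ) ≤ t := h1
    push_cast [Nat.cast_sub (by omega : 1 ≤ t)]
    ring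
  · rw [if_neg ht]
    have hne : ζ ^ t ≠ 1 := by
      intro hcon
      rcases (hprim.pow_eq_one_iff_dvd t).mp hcon with ⟨c, rfl⟩
      have hc : c = 1 := by nlinarith
      subst hc
      simp at ht
    have hpow : (ζ ^ t) ^ n = 1 := by
      rw [← pow_mul, mul_comm, pow_mul, hprim.pow_eq_one, one_pow]
    have hr : ∑ m ∈ range n, (ζ ^ t) ^ m = 0 := geom_zero' hne hpow
    rw [Finset.range_eq_Ico, Finset.sum_eq_sum_Ico_succ_bot (by omega : 0 < n)] at hr
    simp only [pow_zero] at hr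
    linear_combination hr

theorem sum_inv_sin_sq (n : ℕ) (hn : 2 ≤ n) :
    ∑ m ∈ Finset.Ico 1 n, 1 / Real.sin (m * Real.pi / n) ^ 2 =
      ((n : ℝ) ^ 2 - 1) / 3 := by
  have hn0 : n ≠ 0 := by omega
  have hnC : (n:ℂ) ≠ 0 := Nat.cast_ne_zero.mpr hn0
  set ζ : ℂ := Complex.exp (2 * (Real.pi:ℂ) * Complex.I / n) with hζ
  have hprim : IsPrimitiveRoot ζ n := Complex.isPrimitiveRoot_exp n hn0
  have hζn : ζ ^ n = 1 := hprim.pow_eq_one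
  have key : ((∑ m ∈ Finset.Ico 1 n, 1 / Real.sin (m * Real.pi / n) ^ 2 : ℝ) : ℂ)
      = (((n:ℂ)^2 - 1)/3 : ℂ) := by
    push_cast [Complex.ofReal_sin]
    -- Step 1 : express each term through the root of unity ζ^m
    have step1 : ∀ m ∈ Finset.Ico 1 n,
        1 / Complex.sin ((m:ℂ) * (Real.pi:ℂ) / n) ^ 2
          = (-4) * (ζ^m * (∑ k ∈ range n, (k:ℂ) * (ζ^m) ^ k)^2) / (n:ℂ)^2 := by
      intro m hm
      rw [Finset.mem_Ico] at hm
      set x : ℂ := (m:ℂ) * (Real.pi:ℂ) / n with hx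
      have hsq : Complex.exp (x * Complex.I) ^ 2 = ζ ^ m := by
        rw [← Complex.exp_nat_mul, hζ, ← Complex.exp_nat_mul]
        congr 1
        rw [hx]
        push_cast
        field_simp
      have hzm : ζ ^ m ≠ 1 := hprim.pow_ne_one_of_pos_of_lt (by omega) hm.2
      have hzmn : (ζ ^ m) ^ n = 1 := by
        rw [← pow_mul, mul_comm, pow_mul, hζn, one_pow]
      have hA := lemA_s10 hzm hzmn
      have hne : 1 - ζ ^ m ≠ 0 := sub_ne_zero.mpr (Ne.symm hzm)
      have hinv : (1 - ζ^m)⁻¹ = -(∑ k ∈ range n, (k:ℂ) * (ζ^m) ^ k) / n := by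
        refine inv_eq_of_mul_eq_one_right ?_
        rw [← mul_div_assoc, mul_neg, hA, neg_neg, div_self hnC]
      rw [sin_sq_inv x (by rw [hsq]; exact hzm), hsq]
      rw [div_eq_mul_inv (-4 * ζ^m), ← inv_pow, hinv]
      field_simp
    rw [Finset.sum_congr rfl step1]
    -- Step 2 : expand the square into a double sum
    have step2 : ∀ m ∈ Finset.Ico 1 n,
        (-4) * (ζ^m * (∑ k ∈ range n, (k:ℂ) * (ζ^m) ^ k)^2) / (n:ℂ)^2
          = ∑ k ∈ range n, ∑ j ∈ range n,
              ((-4) * ((k:ℂ) * j) / (n:ℂ)^2) * (ζ ^ (k+j+1)) ^ m := by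
      intro m _
      have hpow : ∀ k j : ℕ, (ζ ^ (k+j+1)) ^ m = (ζ^m)^k * (ζ^m)^j * ζ^m := by
        intro k j
        rw [← pow_mul, mul_comm, pow_mul, pow_add, pow_add, pow_one]
      simp only [sq, Finset.sum_mul_sum, Finset.mul_sum, Finset.sum_mul, Finset.sum_div]
      refine Finset.sum_congr rfl fun k _ => Finset.sum_congr rfl fun j _ => ?_
      rw [hpow]; ring
    rw [Finset.sum_congr rfl step2]
    -- Step 3 : swap summations
    rw [Finset.sum_comm]
    have swap2 : ∀ k ∈ range n,
        (∑ m ∈ Finset.Ico 1 n, ∑ j ∈ range n,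
            ((-4) * ((k:ℂ) * j) / (n:ℂ)^2) * (ζ ^ (k+j+1)) ^ m)
          = ∑ j ∈ range n, ∑ m ∈ Finset.Ico 1 n,
              ((-4) * ((k:ℂ) * j) / (n:ℂ)^2) * (ζ ^ (k+j+1)) ^ m :=
      fun k _ => Finset.sum_comm
    rw [Finset.sum_congr rfl swap2]
    -- Step 4 : evaluate the inner geometric sums
    have step4 : ∀ k ∈ range n, ∀ j ∈ range n,
        (∑ m ∈ Finset.Ico 1 n, ((-4) * ((k:ℂ) * j) / (n:ℂ)^2) * (ζ ^ (k+j+1)) ^ m)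
          = ((-4) * ((k:ℂ) * j) / (n:ℂ)^2) *
              (if k+j+1 = n then ((n:ℂ) - 1) else -1) := by
      intro k hk j hj
      rw [Finset.mem_range] at hk hj
      rw [← Finset.mul_sum, innerSumAux hn hprim (k+j+1) (by omega) (by omega)]
    rw [Finset.sum_congr rfl (fun k hk => Finset.sum_congr rfl (step4 k hk))]
    -- Step 5 : compute the double sum
    have core : ∑ k ∈ range n, ∑ j ∈ range n,
        ((k:ℂ)*j) * (if k+j+1 = n then ((n:ℂ)-1) else -1)
          = (n:ℂ) * (((n:ℂ)-1) * (∑ k ∈ range n, (k:ℂ)) - ∑ k ∈ range n, (k:ℂ)^2)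
            - (∑ k ∈ range n, (k:ℂ))^2 := by
      have hj : ∀ k ∈ range n,
          (∑ j ∈ range n, ((k:ℂ)*j) * (if k+j+1 = n then ((n:ℂ)-1) else -1))
            = (k:ℂ) * ((n:ℂ)-1-(k:ℂ)) * n - (k:ℂ) * ∑ j ∈ range n, (j:ℂ) := by
        intro k hk
        rw [Finset.mem_range] at hk
        have hsplit : ∀ j ∈ range n, ((k:ℂ)*j) * (if k+j+1 = n then ((n:ℂ)-1) else -1)
            = (if j = n-1-k then ((k:ℂ)*j*(n:ℂ)) else 0) - (k:ℂ)*j := by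
          intro j hj
          rw [Finset.mem_range] at hj
          by_cases h : k + j + 1 = n
          · rw [if_pos h, if_pos (by omega)]; ring
          · rw [if_neg h, if_neg (by omega)]; ring
        rw [Finset.sum_congr rfl hsplit, Finset.sum_sub_distrib,
          Finset.sum_ite_eq' (range n) (n-1-k) (fun j => (k:ℂ)*j*(n:ℂ)),
          if_pos (Finset.mem_range.mpr (by omega : n-1-k < n)), ← Finset.mul_sum]
        have hcast : ((n-1-k : ℕ):ℂ) = (n:ℂ)-1-(k:ℂ) := by
          rw [Nat.cast_sub (by omega : k ≤ n-1), Nat.cast_sub (by omega : 1 ≤ n)]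
          push_cast; ring
        rw [hcast]
      rw [Finset.sum_congr rfl hj, Finset.sum_sub_distrib]
      congr 1
      · have hterm : ∀ k ∈ range n, (k:ℂ) * ((n:ℂ)-1-(k:ℂ)) * n
            = (n:ℂ) * (((n:ℂ)-1) * (k:ℂ) - (k:ℂ)^2) := fun k _ => by ring
        rw [Finset.sum_congr rfl hterm, ← Finset.mul_sum, Finset.sum_sub_distrib,
          ← Finset.mul_sum]
      · rw [← Finset.sum_mul, sq]
    have pull : ∑ k ∈ range n, ∑ j ∈ range n,
        ((-4) * ((k:ℂ) * j) / (n:ℂ)^2) * (if k+j+1 = n then ((n:ℂ)-1) else -1)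
          = ((-4)/(n:ℂ)^2) * ∑ k ∈ range n, ∑ j ∈ range n,
              ((k:ℂ)*j) * (if k+j+1 = n then ((n:ℂ)-1) else -1) := by
      rw [Finset.mul_sum]
      refine Finset.sum_congr rfl fun k _ => ?_
      rw [Finset.mul_sum]
      refine Finset.sum_congr rfl fun j _ => ?_
      ring
    rw [pull, core, sum_cast_id, sum_cast_sq]
    field_simp
    ring
  exact_mod_cast key
end

section
/- For all integers n ≥ 2 and 0 ≤ k ≤ n, Σ_{m=1}^{n-1} (1 − cos(2πkm/n)) / sin²(mπ/n) = 2k(n − k). -/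
open Finset

lemma aux_sum_cos (n j : ℕ) (hj1 : 1 ≤ j) (hjn : j < n) :
    ∑ m ∈ Finset.Ico 1 n, Real.cos (2 * Real.pi * j * m / n) = -1 := by
  have hnpos : 0 < n := lt_of_le_of_lt (Nat.zero_le j) hjn
  have hn0 : (n:ℝ) ≠ 0 := Nat.cast_ne_zero.mpr hnpos.ne'
  set θ : ℝ := 2 * Real.pi * j / n with hθ
  set z : ℂ := Complex.exp (θ * Complex.I) with hz
  have hz1 : z ≠ 1 := by
    rw [hz]
    intro h1
    rw [Complex.exp_eq_one_iff] at h1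
    obtain ⟨m, hm⟩ := h1
    have hI : (Complex.I : ℂ) ≠ 0 := Complex.I_ne_zero
    have h2 : (θ : ℂ) = m * (2 * Real.pi) := by
      have hm' : (θ:ℂ) * Complex.I = ((m:ℂ) * (2*Real.pi)) * Complex.I := by rw [hm]; ring
      exact mul_right_cancel₀ hI hm'
    have h3 : θ = m * (2 * Real.pi) := by exact_mod_cast h2
    have hπ := Real.pi_pos
    have hjj : (j:ℝ) = m * n := by
      rw [hθ] at h3
      field_simp at h3
      nlinarith [h3]
    have hj0 : (0:ℝ) < j := by exact_mod_cast hj1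
    have hjn' : (j:ℝ) < n := by exact_mod_cast hjn
    have hm0 : (0:ℝ) < m := by nlinarith
    have hm1 : (m:ℝ) < 1 := by nlinarith
    have : (0:ℤ) < m := by exact_mod_cast hm0
    have : (m:ℤ) < 1 := by exact_mod_cast hm1
    omega
  have hzn : z ^ n = 1 := by
    rw [hz, ← Complex.exp_nat_mul]
    have hn0c : (n:ℂ) ≠ 0 := by exact_mod_cast hn0
    have : (n:ℂ) * (θ * Complex.I) = (j : ℤ) * (2 * Real.pi * Complex.I) := by
      rw [hθ]
      push_cast
      field_simp
    rw [this, Complex.exp_int_mul_two_pi_mul_I]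
  have hsum0 : ∑ m ∈ Finset.range n, z ^ m = 0 := by
    rw [geom_sum_eq hz1, hzn]
    simp
  have hre : ∀ m : ℕ, (z ^ m).re = Real.cos (2 * Real.pi * j * m / n) := by
    intro m
    rw [hz, ← Complex.exp_nat_mul]
    have : (m:ℂ) * (θ * Complex.I) = ((2 * Real.pi * j * m / n : ℝ) : ℂ) * Complex.I := by
      have hn0c : (n:ℂ) ≠ 0 := by exact_mod_cast hn0
      rw [hθ]; push_cast; field_simp
    rw [this, Complex.exp_ofReal_mul_I_re]
  have hsum : ∑ m ∈ Finset.range n, Real.cos (2 * Real.pi * j * m / n) = 0 := by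
    have := congrArg Complex.re hsum0
    rw [Complex.re_sum] at this
    simpa [hre] using this
  rw [Finset.range_eq_Ico, Finset.sum_eq_sum_Ico_succ_bot hnpos] at hsum
  simp only [Nat.cast_zero, mul_zero, zero_div, Real.cos_zero] at hsum
  linarith

lemma aux_sin_ne (n m : ℕ) (hm : m ∈ Finset.Ico 1 n) : Real.sin (m * Real.pi / n) ≠ 0 := by
  rw [Finset.mem_Ico] at hm
  have hπ := Real.pi_pos
  have hn0 : (0:ℝ) < n := by
    have : 0 < n := lt_of_le_of_lt (Nat.zero_le m) hm.2
    exact_mod_cast this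
  have hm1 : (1:ℝ) ≤ m := by exact_mod_cast hm.1
  have hmn : (m:ℝ) < n := by exact_mod_cast hm.2
  have h1 : 0 < (m:ℝ) * Real.pi / n := by positivity
  have h2 : (m:ℝ) * Real.pi / n < Real.pi := by
    rw [div_lt_iff₀ hn0]
    nlinarith
  exact (Real.sin_pos_of_pos_of_lt_pi h1 h2).ne'

lemma aux_step (n i : ℕ) (hn : 2 ≤ n) (h : i + 2 ≤ n) :
    ∑ m ∈ Finset.Ico 1 n,
        (1 - Real.cos (2 * Real.pi * (i+2) * m / n)) / Real.sin (m * Real.pi / n) ^ 2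
      + ∑ m ∈ Finset.Ico 1 n,
        (1 - Real.cos (2 * Real.pi * i * m / n)) / Real.sin (m * Real.pi / n) ^ 2
      = 2 * ∑ m ∈ Finset.Ico 1 n,
        (1 - Real.cos (2 * Real.pi * (i+1) * m / n)) / Real.sin (m * Real.pi / n) ^ 2
      - 4 := by
  have hkey : ∀ m ∈ Finset.Ico 1 n,
      (1 - Real.cos (2 * Real.pi * (i+2) * m / n)) / Real.sin (m * Real.pi / n) ^ 2
      + (1 - Real.cos (2 * Real.pi * i * m / n)) / Real.sin (m * Real.pi / n) ^ 2
      - 2 * ((1 - Real.cos (2 * Real.pi * (i+1) * m / n)) / Real.sin (m * Real.pi / n) ^ 2)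
      = 4 * Real.cos (2 * Real.pi * (i+1) * m / n) := by
    intro m hm
    have hs := aux_sin_ne n m hm
    set x : ℝ := m * Real.pi / n with hx
    have e2 : 2 * Real.pi * ((i:ℝ)+2) * m / n = 2 * ((i:ℝ)+2) * x := by rw [hx]; ring
    have e1 : 2 * Real.pi * ((i:ℝ)+1) * m / n = 2 * ((i:ℝ)+1) * x := by rw [hx]; ring
    have e0 : 2 * Real.pi * (i:ℝ) * m / n = 2 * (i:ℝ) * x := by rw [hx]; ring
    push_cast
    rw [e2, e1, e0]
    have hcc : Real.cos (2*((i:ℝ)+2)*x) + Real.cos (2*(i:ℝ)*x)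
        = 2 * Real.cos (2*((i:ℝ)+1)*x) * Real.cos (2*x) := by
      rw [Real.cos_add_cos]
      congr 2 <;> ring
    have h2x : Real.cos (2*x) = 1 - 2 * Real.sin x ^ 2 := by
      rw [Real.cos_two_mul, Real.cos_sq']
      ring
    field_simp
    rw [show (2:ℝ) * x * ((i:ℝ) + 1) = 2 * ((i:ℝ) + 1) * x by ring]
    linear_combination (-1 : ℝ) * hcc + (-2 * Real.cos (2*((i:ℝ)+1)*x)) * h2x
  have hsum := Finset.sum_congr rfl hkey
  rw [Finset.sum_sub_distrib, Finset.sum_add_distrib, ← Finset.mul_sum, ← Finset.mul_sum] at hsum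
  have hc := aux_sum_cos n (i+1) (by omega) (by omega)
  push_cast at hc
  rw [hc] at hsum
  linarith

theorem sum_one_sub_cos_div_sin_sq (n k : ℕ) (hn : 2 ≤ n) (hk : k ≤ n) :
    ∑ m ∈ Finset.Ico 1 n,
        (1 - Real.cos (2 * Real.pi * k * m / n)) / Real.sin (m * Real.pi / n) ^ 2 =
      2 * k * (n - k : ℝ) := by
  induction k using Nat.strong_induction_on with
  | _ k ih =>
    match k, hk with
    | 0, _ =>
      simp
    | 1, _ =>
      have : ∀ m ∈ Finset.Ico 1 n,
          (1 - Real.cos (2 * Real.pi * (1:ℕ) * m / n)) / Real.sin (m * Real.pi / n) ^ 2 = 2 := by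
        intro m hm
        have hs := aux_sin_ne n m hm
        have e : 2 * Real.pi * ((1:ℕ):ℝ) * m / n = 2 * (m * Real.pi / n) := by push_cast; ring
        rw [e, Real.cos_two_mul, Real.cos_sq']
        field_simp
        ring
      rw [Finset.sum_congr rfl this, Finset.sum_const, Nat.card_Ico, nsmul_eq_mul,
        Nat.cast_sub (by omega : 1 ≤ n)]
      push_cast
      ring
    | (i+2), hk2 =>
      have h1 := ih (i+1) (by omega) (by omega)
      have h0 := ih i (by omega) (by omega)
      have hstep := aux_step n i hn hk2
      push_cast at h1 h0 hstep ⊢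
      linarith
end

section
/- Let n ≥ 2 and let M be the n×n real symmetric matrix with M_{ij} = −1/sin²((i−j)π/n) for i ≠ j and M_{ii} = Σ_{k≠i} 1/sin²((i−k)π/n). Then the eigenvalues of M are exactly {2k(n−k) : k = 0, 1, …, n−1} (with multiplicity). -/
open Complex Finset

noncomputable def dysonMu (n : ℕ) : ℂ := Complex.exp (2 * Real.pi * Complex.I / n)

noncomputable def dysonS (n d : ℕ) : ℝ := Real.sin (d * Real.pi / n)

noncomputable def dysonT (n k : ℕ) : ℂ :=
  ∑ d ∈ Finset.Ico 1 n, (1 - dysonMu n ^ (k * d)) / ((dysonS n d : ℂ)) ^ 2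

lemma dysonMu_pow_n {n : ℕ} (hn : n ≠ 0) : dysonMu n ^ n = 1 := by
  have := (Complex.isPrimitiveRoot_exp n hn).pow_eq_one
  simpa [dysonMu] using this

lemma dysonS_ne_zero {n d : ℕ} (h1 : 1 ≤ d) (h2 : d < n) : dysonS n d ≠ 0 := by
  have hn : (0:ℝ) < n := by
    have : 0 < n := by omega
    exact_mod_cast this
  have hd : (0:ℝ) < d := by exact_mod_cast h1
  have hdn : (d:ℝ) < n := by exact_mod_cast h2
  apply ne_of_gt
  apply Real.sin_pos_of_pos_of_lt_pi
  · positivity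
  · rw [div_lt_iff₀ hn]
    calc (d:ℝ) * Real.pi < n * Real.pi := by nlinarith [Real.pi_pos]
    _ = Real.pi * n := by ring

lemma dysonS_reflect {n d : ℕ} (hn : n ≠ 0) (hd : d ≤ n) : dysonS n (n - d) = dysonS n d := by
  have hnR : (n:ℝ) ≠ 0 := Nat.cast_ne_zero.mpr hn
  have : ((n - d : ℕ) : ℝ) = (n : ℝ) - d := by
    push_cast [hd]; ring
  rw [dysonS, this, sub_mul, sub_div, mul_div_cancel_left₀ _ hnR, Real.sin_pi_sub]
  rfl

lemma dyson_pow_mod {n : ℕ} (hn : n ≠ 0) (a : ℕ) : dysonMu n ^ (a % n) = dysonMu n ^ a := by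
  conv_rhs => rw [← Nat.div_add_mod a n, pow_add, pow_mul, dysonMu_pow_n hn, one_pow, one_mul]

lemma dyson_geom {n k : ℕ} (h1 : 1 ≤ k) (h2 : k < n) :
    ∑ d ∈ Finset.range n, dysonMu n ^ (k * d) = 0 := by
  have hn : n ≠ 0 := by omega
  have hprim := Complex.isPrimitiveRoot_exp n hn
  have hne : dysonMu n ^ k ≠ 1 := hprim.pow_ne_one_of_pos_of_lt (by omega) h2
  have : ∑ d ∈ Finset.range n, (dysonMu n ^ k) ^ d = ((dysonMu n ^ k) ^ n - 1) / (dysonMu n ^ k - 1) :=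
    geom_sum_eq hne n
  rw [← pow_mul, mul_comm, pow_mul, dysonMu_pow_n hn, one_pow, sub_self, zero_div] at this
  calc ∑ d ∈ Finset.range n, dysonMu n ^ (k * d)
      = ∑ d ∈ Finset.range n, (dysonMu n ^ k) ^ d := by
        refine Finset.sum_congr rfl fun d _ => ?_; rw [← pow_mul]
    _ = 0 := this

lemma dyson_sin_sq {n d : ℕ} (hn : n ≠ 0) (h1 : 1 ≤ d) (h2 : d < n) :
    4 * ((dysonS n d : ℂ)) ^ 2 = 2 - dysonMu n ^ d - dysonMu n ^ (n - d) := by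
  have hnR : (n:ℝ) ≠ 0 := Nat.cast_ne_zero.mpr hn
  have hd : ((n - d : ℕ) : ℝ) = (n:ℝ) - d := by push_cast [le_of_lt h2]; ring
  have e1 : dysonMu n ^ d = Complex.exp (2 * Real.pi * Complex.I * d / n) := by
    rw [dysonMu, ← Complex.exp_nat_mul]; ring_nf
  have e2 : dysonMu n ^ (n - d) = Complex.exp (-(2 * Real.pi * Complex.I * d / n)) := by
    have hc : ((n - d : ℕ) : ℂ) = (n:ℂ) - d := by push_cast [le_of_lt h2]; ring
    have hnC : (n:ℂ) ≠ 0 := Nat.cast_ne_zero.mpr hn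
    rw [dysonMu, ← Complex.exp_nat_mul, hc]
    have harg : ((n:ℂ) - d) * (2 * Real.pi * Complex.I / n)
        = 2 * Real.pi * Complex.I + -(2 * Real.pi * Complex.I * d / n) := by
      field_simp; ring
    rw [harg, Complex.exp_add, Complex.exp_two_pi_mul_I, one_mul]
  set x : ℂ := (d:ℂ) * Real.pi / n with hx
  have hS : (dysonS n d : ℂ) = Complex.sin x := by
    rw [dysonS, Complex.ofReal_sin, hx]
    norm_cast
  have harg1 : 2 * (Real.pi:ℂ) * Complex.I * d / n = (2*x) * Complex.I := by rw [hx]; ring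
  have harg2 : -(2 * (Real.pi:ℂ) * Complex.I * d / n) = (-(2*x)) * Complex.I := by rw [hx]; ring
  rw [e1, e2, hS, harg1, show -(2*x*Complex.I) = (-(2*x))*Complex.I from by ring, Complex.exp_mul_I, Complex.exp_mul_I, Complex.cos_neg,
    Complex.sin_neg, Complex.cos_two_mul, Complex.sin_two_mul, Complex.cos_sq']
  ring

lemma dyson_reindex {n : ℕ} (g : ℕ → ℂ) :
    ∑ d ∈ Finset.Ico 1 n, g (n - d) = ∑ d ∈ Finset.Ico 1 n, g d := by
  refine Finset.sum_nbij' (fun d => n - d) (fun d => n - d) ?_ ?_ ?_ ?_ (fun a _ => rfl) <;>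
    simp only [Finset.mem_Ico] <;> intro a ha <;> omega

lemma dysonT_zero (n : ℕ) : dysonT n 0 = 0 := by
  simp [dysonT]

lemma dysonT_one {n : ℕ} (hn : 2 ≤ n) : dysonT n 1 = 2 * (n - 1 : ℂ) := by
  have hn0 : n ≠ 0 := by omega
  have key : dysonT n 1 + dysonT n 1 = ∑ d ∈ Finset.Ico 1 n, (4:ℂ) := by
    nth_rewrite 2 [dysonT]
    rw [← dyson_reindex (fun d => (1 - dysonMu n ^ (1 * d)) / ((dysonS n d : ℂ)) ^ 2)]
    rw [dysonT, ← Finset.sum_add_distrib]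
    refine Finset.sum_congr rfl fun d hd => ?_
    simp only [Finset.mem_Ico] at hd
    have hS := dysonS_ne_zero hd.1 hd.2
    have hS2 : ((dysonS n d : ℂ)) ^ 2 ≠ 0 := by
      exact pow_ne_zero 2 (by exact_mod_cast hS)
    have hrefl : dysonS n (n - d) = dysonS n d := dysonS_reflect hn0 (le_of_lt hd.2)
    rw [hrefl]
    have h4 := dyson_sin_sq hn0 hd.1 hd.2
    rw [one_mul, one_mul]
    rw [← add_div, div_eq_iff hS2]
    linear_combination -h4
  have hcard : (Finset.Ico 1 n).card = n - 1 := by simp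
  rw [Finset.sum_const, hcard] at key
  have : (2:ℂ) * dysonT n 1 = 2 * (2 * ((n:ℂ) - 1)) := by
    rw [two_mul, key, nsmul_eq_mul]
    have : ((n - 1 : ℕ) : ℂ) = (n:ℂ) - 1 := by push_cast [Nat.one_le_iff_ne_zero.mpr hn0]; ring
    rw [this]; ring
  have h2 : (2:ℂ) ≠ 0 := two_ne_zero
  exact mul_left_cancel₀ h2 this

lemma dysonT_rec {n m : ℕ} (h1 : 1 ≤ m + 1) (h2 : m + 1 < n) :
    dysonT n (m + 2) + dysonT n m = 2 * dysonT n (m + 1) - 4 := by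
  have hn0 : n ≠ 0 := by omega
  have key : dysonT n (m + 2) + dysonT n m - 2 * dysonT n (m + 1)
      = ∑ d ∈ Finset.Ico 1 n, 4 * dysonMu n ^ ((m + 1) * d) := by
    rw [dysonT, dysonT, dysonT, Finset.mul_sum, ← Finset.sum_add_distrib, ← Finset.sum_sub_distrib]
    refine Finset.sum_congr rfl fun d hd => ?_
    simp only [Finset.mem_Ico] at hd
    have hS := dysonS_ne_zero hd.1 hd.2
    have hS2 : ((dysonS n d : ℂ)) ^ 2 ≠ 0 := pow_ne_zero 2 (by exact_mod_cast hS)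
    have h4 := dyson_sin_sq hn0 hd.1 hd.2
    set w : ℂ := dysonMu n ^ d with hw
    set u : ℂ := dysonMu n ^ (n - d) with hu
    have hwu : w * u = 1 := by
      rw [hw, hu, ← pow_add]
      have : d + (n - d) = n := by omega
      rw [this, dysonMu_pow_n hn0]
    have hp1 : dysonMu n ^ ((m + 2) * d) = w ^ (m + 2) := by rw [hw, ← pow_mul, mul_comm]
    have hp2 : dysonMu n ^ (m * d) = w ^ m := by rw [hw, ← pow_mul, mul_comm]
    have hp3 : dysonMu n ^ ((m + 1) * d) = w ^ (m + 1) := by rw [hw, ← pow_mul, mul_comm]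
    rw [hp1, hp2, hp3]
    have hnum : (1 - w ^ (m + 2)) + (1 - w ^ m) - 2 * (1 - w ^ (m + 1))
        = w ^ (m + 1) * (2 - w - u) := by linear_combination (w ^ m) * hwu
    rw [mul_div_assoc', ← add_div, ← sub_div, div_eq_iff hS2]
    linear_combination hnum - w ^ (m + 1) * h4
  have hsum : ∑ d ∈ Finset.Ico 1 n, (4:ℂ) * dysonMu n ^ ((m + 1) * d) = -4 := by
    rw [← Finset.mul_sum]
    have hrange : ∑ d ∈ Finset.range n, dysonMu n ^ ((m + 1) * d) = 0 :=
      dyson_geom h1 h2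
    have hsplit : ∑ d ∈ Finset.range n, dysonMu n ^ ((m + 1) * d)
        = dysonMu n ^ ((m + 1) * 0) + ∑ d ∈ Finset.Ico 1 n, dysonMu n ^ ((m + 1) * d) := by
      rw [Finset.range_eq_Ico]
      exact Finset.sum_eq_sum_Ico_succ_bot (by omega) _
    rw [hrange, mul_zero, pow_zero] at hsplit
    have : ∑ d ∈ Finset.Ico 1 n, dysonMu n ^ ((m + 1) * d) = -1 := by linear_combination -hsplit
    rw [this]; ring
  rw [hsum] at key
  linear_combination key

lemma dysonT_eq {n : ℕ} (hn : 2 ≤ n) : ∀ k, k < n → dysonT n k = 2 * k * ((n : ℂ) - k) := by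
  intro k
  induction k using Nat.strong_induction_on with
  | _ k ih =>
    match k with
    | 0 => intro _; rw [dysonT_zero]; push_cast; ring
    | 1 => intro _; rw [dysonT_one hn]; push_cast; ring
    | (m + 2) =>
      intro hk
      have h1 : dysonT n (m + 1) = 2 * (m + 1 : ℂ) * ((n : ℂ) - (m + 1)) := by
        have := ih (m + 1) (by omega) (by omega)
        push_cast at this ⊢; linear_combination this
      have h0 : dysonT n m = 2 * (m : ℂ) * ((n : ℂ) - m) := ih m (by omega) (by omega)
      have hrec := dysonT_rec (n := n) (m := m) (by omega) (by omega)
      rw [h1, h0] at hrec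
      push_cast
      linear_combination hrec

lemma dyson_sinsq_shift {n i d : ℕ} (hn : n ≠ 0) (hi : i < n) (h1 : 1 ≤ d) (h2 : d < n) :
    Real.sin (((i:ℝ) - (((i + d) % n : ℕ) : ℝ)) * Real.pi / n) ^ 2 = dysonS n d ^ 2 := by
  rcases lt_or_ge (i + d) n with h | h
  · rw [Nat.mod_eq_of_lt h]
    have hc : ((i:ℝ) - ((i + d : ℕ):ℝ)) = -(d:ℝ) := by push_cast; ring
    rw [hc, show (-(d:ℝ)) * Real.pi / n = -((d:ℝ) * Real.pi / n) by ring, Real.sin_neg, dysonS]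
    ring
  · have hmod : (i + d) % n = i + d - n := by
      rw [Nat.mod_eq_sub_mod h, Nat.mod_eq_of_lt (by omega)]
    rw [hmod]
    have hc : (((i + d - n : ℕ)):ℝ) = (i:ℝ) + d - n := by push_cast [h]; ring
    have hc2 : ((i:ℝ) - ((i:ℝ) + d - n)) = ((n - d : ℕ) : ℝ) := by push_cast [le_of_lt h2]; ring
    rw [hc, hc2]
    have := dysonS_reflect hn (le_of_lt h2)
    rw [dysonS] at this
    rw [this]

open Fin.NatCast in
lemma dyson_row {n : ℕ} (hn : 2 ≤ n) (M : Matrix (Fin n) (Fin n) ℝ)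
    (hM : ∀ i j, M i j =
      if i = j then ∑ k ∈ Finset.univ.erase i,
          1 / Real.sin (((i : ℕ) - (k : ℕ) : ℝ) * Real.pi / n) ^ 2
      else -1 / Real.sin (((i : ℕ) - (j : ℕ) : ℝ) * Real.pi / n) ^ 2)
    (i k : Fin n) :
    ∑ j, (M i j : ℂ) * dysonMu n ^ ((j:ℕ) * (k:ℕ))
      = dysonMu n ^ ((i:ℕ) * (k:ℕ)) * (2 * (k:ℕ) * ((n : ℂ) - (k:ℕ))) := by
  haveI : NeZero n := ⟨by omega⟩
  have hn0 : n ≠ 0 := by omega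
  -- split off the diagonal term
  have hsplit : ∑ j, (M i j : ℂ) * dysonMu n ^ ((j:ℕ) * (k:ℕ))
      = (∑ j ∈ Finset.univ.erase i, (M i j : ℂ) * dysonMu n ^ ((j:ℕ) * (k:ℕ)))
        + (M i i : ℂ) * dysonMu n ^ ((i:ℕ) * (k:ℕ)) := by
    rw [Finset.sum_erase_add Finset.univ _ (Finset.mem_univ i)]
  rw [hsplit]
  -- rewrite diagonal entry as a sum
  have hdiag : (M i i : ℂ) = ∑ j ∈ Finset.univ.erase i,
      (1 / (Real.sin (((i : ℕ) - (j : ℕ) : ℝ) * Real.pi / n) : ℂ) ^ 2) := by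
    rw [hM i i, if_pos rfl]
    push_cast
    rfl
  rw [hdiag, Finset.sum_mul, ← Finset.sum_add_distrib]
  -- now a single sum over j ≠ i
  have hterm : ∀ j ∈ Finset.univ.erase i,
      (M i j : ℂ) * dysonMu n ^ ((j:ℕ) * (k:ℕ))
        + (1 / (Real.sin (((i : ℕ) - (j : ℕ) : ℝ) * Real.pi / n) : ℂ) ^ 2)
            * dysonMu n ^ ((i:ℕ) * (k:ℕ))
      = dysonMu n ^ ((i:ℕ) * (k:ℕ)) *
          ((1 - dysonMu n ^ ((k:ℕ) * (((j - i : Fin n) : ℕ)))) /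
            ((dysonS n ((j - i : Fin n) : ℕ) : ℂ)) ^ 2) := by
    intro j hj
    have hji : j ≠ i := Finset.ne_of_mem_erase hj
    set d : ℕ := ((j - i : Fin n) : ℕ) with hd
    have hjd : j = i + (d : Fin n) := by
      rw [hd, Fin.cast_val_eq_self]
      abel
    have hd1 : 1 ≤ d := by
      rcases Nat.eq_zero_or_pos d with h0 | h
      · exfalso
        apply hji
        have hz : j - i = 0 := Fin.ext (by simpa [hd] using h0)
        rwa [sub_eq_zero] at hz
      · exact h
    have hdn : d < n := (j - i : Fin n).isLt
    have hjval : (j : ℕ) = ((i : ℕ) + d) % n := by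
      rw [hjd, Fin.add_def, Fin.val_natCast, Nat.mod_eq_of_lt hdn]
    have hMij : M i j = -1 / Real.sin (((i : ℕ) - (j : ℕ) : ℝ) * Real.pi / n) ^ 2 := by
      rw [hM i j, if_neg (fun h => hji h.symm)]
    have hsin : Real.sin (((i : ℕ) - (j : ℕ) : ℝ) * Real.pi / n) ^ 2 = dysonS n d ^ 2 := by
      rw [hjval]
      exact dyson_sinsq_shift hn0 i.isLt hd1 hdn
    have hpow : dysonMu n ^ ((j:ℕ) * (k:ℕ))
        = dysonMu n ^ ((i:ℕ) * (k:ℕ)) * dysonMu n ^ (d * (k:ℕ)) := by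
      rw [hjval, pow_mul, dyson_pow_mod hn0, ← pow_mul, add_mul, pow_add]
    have hSne : ((dysonS n d : ℂ)) ^ 2 ≠ 0 :=
      pow_ne_zero 2 (by exact_mod_cast dysonS_ne_zero hd1 hdn)
    rw [hMij, hpow]
    have hsinC : ((Real.sin (((i : ℕ) - (j : ℕ) : ℝ) * Real.pi / n) : ℂ)) ^ 2
        = ((dysonS n d : ℂ)) ^ 2 := by exact_mod_cast hsin
    rw [Complex.ofReal_div, Complex.ofReal_neg, Complex.ofReal_one, Complex.ofReal_pow, hsinC,
      mul_comm (k:ℕ) d]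
    field_simp
    ring
  rw [Finset.sum_congr rfl hterm]
  rw [← Finset.mul_sum]
  have hre : ∑ j ∈ Finset.univ.erase i,
      ((1 - dysonMu n ^ ((k:ℕ) * (((j - i : Fin n) : ℕ)))) /
        ((dysonS n ((j - i : Fin n) : ℕ) : ℂ)) ^ 2)
      = ∑ d ∈ Finset.Ico 1 n,
        ((1 - dysonMu n ^ ((k:ℕ) * d)) / ((dysonS n d : ℂ)) ^ 2) := by
    refine Finset.sum_nbij' (fun j => ((j - i : Fin n) : ℕ)) (fun d => i + (d : Fin n))
      ?_ ?_ ?_ ?_ (fun a _ => rfl)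
    · intro j hj
      have hji : j ≠ i := Finset.ne_of_mem_erase hj
      simp only [Finset.mem_Ico]
      constructor
      · rcases Nat.eq_zero_or_pos ((j - i : Fin n) : ℕ) with h0 | h
        · exfalso
          apply hji
          have hz : j - i = 0 := Fin.ext (by simpa using h0)
          rwa [sub_eq_zero] at hz
        · exact h
      · exact (j - i : Fin n).isLt
    · intro d hd
      simp only [Finset.mem_Ico] at hd
      refine Finset.mem_erase.mpr ⟨?_, Finset.mem_univ _⟩
      intro h
      have : (d : Fin n) = 0 := by
        have := congrArg (· - i) h
        simpa [add_sub_cancel_right] using this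
      have hv := congrArg Fin.val this
      rw [Fin.val_natCast, Nat.mod_eq_of_lt hd.2] at hv
      simp at hv
      omega
    · intro j hj
      rw [Fin.cast_val_eq_self]
      abel
    · intro d hd
      simp only [Finset.mem_Ico] at hd
      rw [add_sub_cancel_left, Fin.val_natCast, Nat.mod_eq_of_lt hd.2]
  rw [hre, ← dysonT, dysonT_eq hn (k:ℕ) k.isLt]

open Polynomial in
/-- The Hessian of the Dyson potential at the equally spaced configuration has
eigenvalues `2k(n-k)`, `k = 0, …, n-1` (stated via the characteristic polynomial). -/
theorem eigenvalues_hessian_dyson (n : ℕ) (hn : 2 ≤ n)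
    (M : Matrix (Fin n) (Fin n) ℝ)
    (hM : ∀ i j, M i j =
      if i = j then ∑ k ∈ Finset.univ.erase i,
          1 / Real.sin (((i : ℕ) - (k : ℕ) : ℝ) * Real.pi / n) ^ 2
      else -1 / Real.sin (((i : ℕ) - (j : ℕ) : ℝ) * Real.pi / n) ^ 2) :
    M.charpoly = ∏ k ∈ Finset.range n, (X - C (2 * k * (n - k : ℝ))) := by
  haveI : NeZero n := ⟨by omega⟩
  have hn0 : n ≠ 0 := by omega
  set F : Matrix (Fin n) (Fin n) ℂ :=
    Matrix.vandermonde (fun i : Fin n => dysonMu n ^ (i:ℕ)) with hF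
  set D : Matrix (Fin n) (Fin n) ℂ :=
    Matrix.diagonal (fun k : Fin n => 2 * ((k:ℕ):ℂ) * ((n:ℂ) - ((k:ℕ):ℂ))) with hD
  set A : Matrix (Fin n) (Fin n) ℂ := M.map Complex.ofRealHom with hA
  have hAF : A * F = F * D := by
    ext i k
    rw [Matrix.mul_apply, Matrix.mul_diagonal]
    calc ∑ j, A i j * F j k
        = ∑ j, (M i j : ℂ) * dysonMu n ^ ((j:ℕ) * (k:ℕ)) := by
          refine Finset.sum_congr rfl fun j _ => ?_
          rw [hA, hF, Matrix.map_apply, Matrix.vandermonde_apply, ← pow_mul]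
          rfl
      _ = dysonMu n ^ ((i:ℕ) * (k:ℕ)) * (2 * ((k:ℕ):ℂ) * ((n:ℂ) - ((k:ℕ):ℂ))) :=
          dyson_row hn M hM i k
      _ = F i k * (2 * ((k:ℕ):ℂ) * ((n:ℂ) - ((k:ℕ):ℂ))) := by
          rw [hF, Matrix.vandermonde_apply, ← pow_mul]
  have hdet : F.det ≠ 0 := by
    rw [hF, Matrix.det_vandermonde_ne_zero_iff]
    intro a b hab
    refine Fin.ext ((Complex.isPrimitiveRoot_exp n hn0).pow_inj a.isLt b.isLt ?_)
    simpa [dysonMu] using hab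
  have hconj : A.charmatrix * F.map Polynomial.C = F.map Polynomial.C * D.charmatrix := by
    unfold Matrix.charmatrix
    rw [sub_mul, mul_sub]
    congr 1
    · exact (Matrix.scalar_commute (X : ℂ[X]) (fun r => Commute.all _ _)
        (F.map Polynomial.C)).eq
    · rw [RingHom.mapMatrix_apply, RingHom.mapMatrix_apply, ← Matrix.map_mul, hAF,
        Matrix.map_mul]
  have hcpAD : A.charpoly = D.charpoly := by
    have hdets := congrArg Matrix.det hconj
    rw [Matrix.det_mul, Matrix.det_mul] at hdets
    have hFc : (F.map Polynomial.C).det = Polynomial.C F.det := by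
      rw [← RingHom.mapMatrix_apply]
      exact (RingHom.map_det _ _).symm
    rw [hFc] at hdets
    have hC : Polynomial.C F.det ≠ 0 := fun h => hdet (by simpa using h)
    apply mul_right_cancel₀ hC
    rw [Matrix.charpoly, Matrix.charpoly, hdets, mul_comm]
  have hDcp : D.charpoly
      = ∏ k : Fin n, ((X : ℂ[X]) - Polynomial.C (2 * ((k:ℕ):ℂ) * ((n:ℂ) - ((k:ℕ):ℂ)))) := by
    have hDc : D.charmatrix = Matrix.diagonal
        (fun k : Fin n => (X : ℂ[X]) - Polynomial.C (2 * ((k:ℕ):ℂ) * ((n:ℂ) - ((k:ℕ):ℂ)))) := by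
      ext a b
      by_cases h : a = b
      · subst h
        simp [Matrix.charmatrix_apply_eq, hD, Matrix.diagonal_apply_eq]
      · simp [Matrix.charmatrix_apply_ne _ _ _ h, hD, Matrix.diagonal_apply_ne _ h]
    rw [Matrix.charpoly, hDc, Matrix.det_diagonal]
  have hmap : M.charpoly.map Complex.ofRealHom
      = (∏ k ∈ Finset.range n, ((X : ℝ[X]) - C (2 * k * ((n:ℝ) - k)))).map
          Complex.ofRealHom := by
    rw [← Matrix.charpoly_map M Complex.ofRealHom, ← hA, hcpAD, hDcp, Polynomial.map_prod]
    rw [Fin.prod_univ_eq_prod_range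
      (fun k : ℕ => (X : ℂ[X]) - Polynomial.C (2 * (k:ℂ) * ((n:ℂ) - (k:ℂ))))]
    refine Finset.prod_congr rfl fun k _ => ?_
    rw [Polynomial.map_sub, Polynomial.map_X, Polynomial.map_C]
    congr 1
    congr 1
    rw [Complex.ofRealHom_eq_coe]
    push_cast
    ring
  exact Polynomial.map_injective Complex.ofRealHom Complex.ofReal_injective hmap
end

section
/- The Hessian of the function f(q_1,q_2,q_3) = −log sin(q_1−q_2) − log sin(q_1−q_3) − log sin(q_2−q_3) at the point (2π/3, π/3, 0) equals (4/3)(3I − J), where J is the 3×3 all-ones matrix; in particular its eigenvalues are 0, 4, 4. -/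
lemma hasDerivAt_logsin (a β x : ℝ) (h : Real.sin (a + β * x) ≠ 0) :
    HasDerivAt (fun s => Real.log (Real.sin (a + β * s)))
      (β * (Real.cos (a + β * x) / Real.sin (a + β * x))) x := by
  have h1 : HasDerivAt (fun s : ℝ => a + β * s) β x := by
    simpa using ((hasDerivAt_id x).const_mul β).const_add a
  have h2 := (Real.hasDerivAt_sin (a + β * x)).comp x h1
  have h3 := (Real.hasDerivAt_log h).comp x h2
  refine h3.congr_deriv ?_
  field_simp

lemma hasDerivAt_cot (a α β : ℝ) (h : Real.sin a ≠ 0) :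
    HasDerivAt (fun t => β * (Real.cos (a + α * t) / Real.sin (a + α * t)))
      (-(α * β / Real.sin a ^ 2)) 0 := by
  have h1 : HasDerivAt (fun t : ℝ => a + α * t) α 0 := by
    simpa using ((hasDerivAt_id (0:ℝ)).const_mul α).const_add a
  have hc := (Real.hasDerivAt_cos (a + α * 0)).comp 0 h1
  have hs := (Real.hasDerivAt_sin (a + α * 0)).comp 0 h1
  have h0 : Real.sin (a + α * 0) ≠ 0 := by simpa using h
  have := (hc.div hs h0).const_mul β
  refine this.congr_deriv ?_
  simp only [mul_zero, add_zero, Function.comp_apply] at *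
  field_simp
  linear_combination (-α * β) * Real.sin_sq_add_cos_sq a

lemma main_lemma (a b c α₁ β₁ α₂ β₂ α₃ β₃ : ℝ)
    (ha : 0 < Real.sin a) (hb : 0 < Real.sin b) (hc : 0 < Real.sin c) :
    deriv (fun t => deriv (fun s =>
        -Real.log (Real.sin (a + α₁ * t + β₁ * s))
          - Real.log (Real.sin (b + α₂ * t + β₂ * s))
          - Real.log (Real.sin (c + α₃ * t + β₃ * s))) 0) 0
      = α₁ * β₁ / Real.sin a ^ 2 + α₂ * β₂ / Real.sin b ^ 2 + α₃ * β₃ / Real.sin c ^ 2 := by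
  have hev : ∀ᶠ t : ℝ in nhds 0,
      deriv (fun s =>
        -Real.log (Real.sin (a + α₁ * t + β₁ * s))
          - Real.log (Real.sin (b + α₂ * t + β₂ * s))
          - Real.log (Real.sin (c + α₃ * t + β₃ * s))) 0
      = -(β₁ * (Real.cos (a + α₁ * t) / Real.sin (a + α₁ * t)))
          - β₂ * (Real.cos (b + α₂ * t) / Real.sin (b + α₂ * t))
          - β₃ * (Real.cos (c + α₃ * t) / Real.sin (c + α₃ * t)) := by
    have hca : ContinuousAt (fun t : ℝ => Real.sin (a + α₁ * t)) 0 := by fun_prop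
    have hcb : ContinuousAt (fun t : ℝ => Real.sin (b + α₂ * t)) 0 := by fun_prop
    have hcc : ContinuousAt (fun t : ℝ => Real.sin (c + α₃ * t)) 0 := by fun_prop
    have h1 := continuousAt_const.eventually_lt hca (by simpa using ha)
    have h2 := continuousAt_const.eventually_lt hcb (by simpa using hb)
    have h3 := continuousAt_const.eventually_lt hcc (by simpa using hc)
    filter_upwards [h1, h2, h3] with t ht1 ht2 ht3
    have d1 := hasDerivAt_logsin (a + α₁ * t) β₁ 0 (by simpa using ht1.ne')
    have d2 := hasDerivAt_logsin (b + α₂ * t) β₂ 0 (by simpa using ht2.ne')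
    have d3 := hasDerivAt_logsin (c + α₃ * t) β₃ 0 (by simpa using ht3.ne')
    have D := (d1.neg.sub d2).sub d3
    simp only [mul_zero, add_zero] at D
    exact D.deriv
  rw [Filter.EventuallyEq.deriv_eq hev]
  have d1 := hasDerivAt_cot a α₁ β₁ ha.ne'
  have d2 := hasDerivAt_cot b α₂ β₂ hb.ne'
  have d3 := hasDerivAt_cot c α₃ β₃ hc.ne'
  have D := (d1.neg.sub d2).sub d3
  erw [D.deriv]
  ring

set_option maxHeartbeats 1600000 in
/-- Hessian of the `A₂` Dyson potential at the equilibrium `(2π/3, π/3, 0)`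
equals `(4/3)(3I - J)`; in particular its eigenvalues are `0, 4, 4`. -/
theorem hessian_dyson_A2 :
    let f : (Fin 3 → ℝ) → ℝ := fun q =>
      -Real.log (Real.sin (q 0 - q 1)) - Real.log (Real.sin (q 0 - q 2))
        - Real.log (Real.sin (q 1 - q 2))
    let q₀ : Fin 3 → ℝ := ![2 * Real.pi / 3, Real.pi / 3, 0]
    let H : Matrix (Fin 3) (Fin 3) ℝ := fun i j =>
      (4 / 3) * ((if i = j then 3 else 0) - 1)
    (∀ i j : Fin 3,
        deriv (fun t : ℝ => deriv (fun s : ℝ => f (q₀ + t • (Pi.single i 1 : Fin 3 → ℝ) + s • (Pi.single j 1 : Fin 3 → ℝ))) 0) 0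
          = H i j) ∧
      H.charpoly = Polynomial.X * (Polynomial.X - Polynomial.C 4) ^ 2 := by
  intro f q₀ H
  have hs1 : 0 < Real.sin (Real.pi / 3) := by
    rw [Real.sin_pi_div_three]; positivity
  have hs2 : 0 < Real.sin (2 * Real.pi / 3) := by
    rw [show 2 * Real.pi / 3 = Real.pi - Real.pi / 3 by ring, Real.sin_pi_sub,
      Real.sin_pi_div_three]; positivity
  have h34 : Real.sin (Real.pi / 3) ^ 2 = 3 / 4 := by
    rw [Real.sin_pi_div_three, div_pow, Real.sq_sqrt (by norm_num : (3:ℝ) ≥ 0)]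
    norm_num
  have h34' : Real.sin (2 * Real.pi / 3) ^ 2 = 3 / 4 := by
    rw [show 2 * Real.pi / 3 = Real.pi - Real.pi / 3 by ring, Real.sin_pi_sub]
    exact h34
  constructor
  · intro i j
    fin_cases i <;> fin_cases j
    · -- i = 0, j = 0
      trans (deriv (fun t : ℝ => deriv (fun s : ℝ =>
          -Real.log (Real.sin (Real.pi/3 + 1 * t + 1 * s))
            - Real.log (Real.sin (2*Real.pi/3 + 1 * t + 1 * s))
            - Real.log (Real.sin (Real.pi/3 + 0 * t + 0 * s))) 0) 0)
      · congr 1; funext t; congr 1; funext s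
        simp [-Real.sin_pi_div_three, f, q₀, Matrix.vecHead, Matrix.vecTail, Function.comp, Pi.single_apply]
        ring_nf
      · rw [main_lemma _ _ _ _ _ _ _ _ _ hs1 hs2 hs1, h34, h34']
        norm_num [H, Fin.ext_iff]
    · -- i = 0, j = 1
      trans (deriv (fun t : ℝ => deriv (fun s : ℝ =>
          -Real.log (Real.sin (Real.pi/3 + 1 * t + (-1) * s))
            - Real.log (Real.sin (2*Real.pi/3 + 1 * t + 0 * s))
            - Real.log (Real.sin (Real.pi/3 + 0 * t + 1 * s))) 0) 0)
      · congr 1; funext t; congr 1; funext s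
        simp [-Real.sin_pi_div_three, f, q₀, Matrix.vecHead, Matrix.vecTail, Function.comp, Pi.single_apply]
        ring_nf
      · rw [main_lemma _ _ _ _ _ _ _ _ _ hs1 hs2 hs1, h34, h34']
        norm_num [H, Fin.ext_iff]
    · -- i = 0, j = 2
      trans (deriv (fun t : ℝ => deriv (fun s : ℝ =>
          -Real.log (Real.sin (Real.pi/3 + 1 * t + 0 * s))
            - Real.log (Real.sin (2*Real.pi/3 + 1 * t + (-1) * s))
            - Real.log (Real.sin (Real.pi/3 + 0 * t + (-1) * s))) 0) 0)
      · congr 1; funext t; congr 1; funext s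
        simp [-Real.sin_pi_div_three, f, q₀, Matrix.vecHead, Matrix.vecTail, Function.comp, Pi.single_apply]
        ring_nf
      · rw [main_lemma _ _ _ _ _ _ _ _ _ hs1 hs2 hs1, h34, h34']
        norm_num [H, Fin.ext_iff]
    · -- i = 1, j = 0
      trans (deriv (fun t : ℝ => deriv (fun s : ℝ =>
          -Real.log (Real.sin (Real.pi/3 + (-1) * t + 1 * s))
            - Real.log (Real.sin (2*Real.pi/3 + 0 * t + 1 * s))
            - Real.log (Real.sin (Real.pi/3 + 1 * t + 0 * s))) 0) 0)
      · congr 1; funext t; congr 1; funext s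
        simp [-Real.sin_pi_div_three, f, q₀, Matrix.vecHead, Matrix.vecTail, Function.comp, Pi.single_apply]
        ring_nf
      · rw [main_lemma _ _ _ _ _ _ _ _ _ hs1 hs2 hs1, h34, h34']
        norm_num [H, Fin.ext_iff]
    · -- i = 1, j = 1
      trans (deriv (fun t : ℝ => deriv (fun s : ℝ =>
          -Real.log (Real.sin (Real.pi/3 + (-1) * t + (-1) * s))
            - Real.log (Real.sin (2*Real.pi/3 + 0 * t + 0 * s))
            - Real.log (Real.sin (Real.pi/3 + 1 * t + 1 * s))) 0) 0)
      · congr 1; funext t; congr 1; funext s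
        simp [-Real.sin_pi_div_three, f, q₀, Matrix.vecHead, Matrix.vecTail, Function.comp, Pi.single_apply]
        ring_nf
      · rw [main_lemma _ _ _ _ _ _ _ _ _ hs1 hs2 hs1, h34, h34']
        norm_num [H, Fin.ext_iff]
    · -- i = 1, j = 2
      trans (deriv (fun t : ℝ => deriv (fun s : ℝ =>
          -Real.log (Real.sin (Real.pi/3 + (-1) * t + 0 * s))
            - Real.log (Real.sin (2*Real.pi/3 + 0 * t + (-1) * s))
            - Real.log (Real.sin (Real.pi/3 + 1 * t + (-1) * s))) 0) 0)
      · congr 1; funext t; congr 1; funext s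
        simp [-Real.sin_pi_div_three, f, q₀, Matrix.vecHead, Matrix.vecTail, Function.comp, Pi.single_apply]
        ring_nf
      · rw [main_lemma _ _ _ _ _ _ _ _ _ hs1 hs2 hs1, h34, h34']
        norm_num [H, Fin.ext_iff]
    · -- i = 2, j = 0
      trans (deriv (fun t : ℝ => deriv (fun s : ℝ =>
          -Real.log (Real.sin (Real.pi/3 + 0 * t + 1 * s))
            - Real.log (Real.sin (2*Real.pi/3 + (-1) * t + 1 * s))
            - Real.log (Real.sin (Real.pi/3 + (-1) * t + 0 * s))) 0) 0)
      · congr 1; funext t; congr 1; funext s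
        simp [-Real.sin_pi_div_three, f, q₀, Matrix.vecHead, Matrix.vecTail, Function.comp, Pi.single_apply]
        ring_nf
      · rw [main_lemma _ _ _ _ _ _ _ _ _ hs1 hs2 hs1, h34, h34']
        norm_num [H, Fin.ext_iff]
    · -- i = 2, j = 1
      trans (deriv (fun t : ℝ => deriv (fun s : ℝ =>
          -Real.log (Real.sin (Real.pi/3 + 0 * t + (-1) * s))
            - Real.log (Real.sin (2*Real.pi/3 + (-1) * t + 0 * s))
            - Real.log (Real.sin (Real.pi/3 + (-1) * t + 1 * s))) 0) 0)
      · congr 1; funext t; congr 1; funext s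
        simp [-Real.sin_pi_div_three, f, q₀, Matrix.vecHead, Matrix.vecTail, Function.comp, Pi.single_apply]
        ring_nf
      · rw [main_lemma _ _ _ _ _ _ _ _ _ hs1 hs2 hs1, h34, h34']
        norm_num [H, Fin.ext_iff]
    · -- i = 2, j = 2
      trans (deriv (fun t : ℝ => deriv (fun s : ℝ =>
          -Real.log (Real.sin (Real.pi/3 + 0 * t + 0 * s))
            - Real.log (Real.sin (2*Real.pi/3 + (-1) * t + (-1) * s))
            - Real.log (Real.sin (Real.pi/3 + (-1) * t + (-1) * s))) 0) 0)
      · congr 1; funext t; congr 1; funext s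
        simp [-Real.sin_pi_div_three, f, q₀, Matrix.vecHead, Matrix.vecTail, Function.comp, Pi.single_apply]
        ring_nf
      · rw [main_lemma _ _ _ _ _ _ _ _ _ hs1 hs2 hs1, h34, h34']
        norm_num [H, Fin.ext_iff]
  · rw [Matrix.charpoly, Matrix.det_fin_three]
    apply Polynomial.funext
    intro x
    simp only [Matrix.charmatrix_apply]
    simp [H]
    ring
end
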